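/- Let $k = \mathbb{F}_q \subseteq K = \mathbb{F}_{q^3}$ be finite fields of characteristic $2$ and let $\mathrm{Tr}: K \to k$ be the trace map. The number of pairs $(a,d)$ with $a \in K^*$ and $d \in K$ satisfying $a + a^q + d \neq 0$ and $\mathrm{Tr}(a) + \mathrm{Tr}(d) \neq 1$ equals $q^6 - q^5 - 2q^3 + 2q^2 + 1$. -/

import Mathlib

/-- Let `k = 𝔽_q ⊆ K = 𝔽_{q³}` be finite fields of characteristic 2 with trace
`Tr(x) = x + x^q + x^{q²}`. The number of pairs `(a,d)` with `a ∈ K*`, `d ∈ K`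
satisfying `a + a^q + d ≠ 0` and `Tr(a) + Tr(d) ≠ 1` equals
`q⁶ - q⁵ - 2q³ + 2q² + 1`. -/
theorem stmt_6 (K : Type) [Field K] [Fintype K] [CharP K 2] (q : ℕ)
    (hK : Fintype.card K = q ^ 3) :
    (Nat.card {v : K × K //
        v.1 ≠ 0 ∧
        v.1 + v.1 ^ q + v.2 ≠ 0 ∧
        (v.1 + v.1 ^ q + v.1 ^ q ^ 2) + (v.2 + v.2 ^ q + v.2 ^ q ^ 2) ≠ 1} : ℤ)
      = q ^ 6 - q ^ 5 - 2 * q ^ 3 + 2 * q ^ 2 + 1 := by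
  classical
  have hfact : Fact (Nat.Prime 2) := ⟨Nat.prime_two⟩
  -- q is a power of 2, q ≥ 2
  obtain ⟨n, -, hn⟩ := FiniteField.card K 2
  have hqdvd : q ∣ 2 ^ (n : ℕ) := by
    rw [← hn, hK]; exact dvd_pow_self q (by norm_num)
  obtain ⟨m, -, hm⟩ := (Nat.dvd_prime_pow Nat.prime_two).1 hqdvd
  have hq1 : 1 < q := by
    have h2 : 1 < Fintype.card K := Fintype.one_lt_card
    rw [hK] at h2
    by_contra h
    push_neg at h
    interval_cases q <;> norm_num at h2
  have hq0 : 0 < q := by omega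
  -- the trace-like map
  set F : K → K := fun x => x + x ^ q + x ^ q ^ 2 with hF
  -- basic power facts
  have hpowq : ∀ x y : K, (x + y) ^ q = x ^ q + y ^ q := by
    intro x y
    rw [hm]
    exact add_pow_char_pow ..
  have hq3 : ∀ x : K, ((x ^ q) ^ q) ^ q = x := by
    intro x
    rw [← pow_mul, ← pow_mul]
    first
    | rw [show q * q * q = q ^ 3 by ring, ← hK, FiniteField.pow_card]
    | rw [show q * (q * q) = q ^ 3 by ring, ← hK, FiniteField.pow_card]
  have hsq : ∀ x : K, x ^ q ^ 2 = (x ^ q) ^ q := by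
    intro x; rw [← pow_mul, sq]
  have hFadd : ∀ x y : K, F (x + y) = F x + F y := by
    intro x y
    simp only [hF, hsq, hpowq]
    ring
  have hchar2 : ∀ x : K, x + x = 0 := fun x => CharTwo.add_self_eq_zero x
  have hF0 : F 0 = 0 := by simp [hF, zero_pow hq0.ne', zero_pow (pow_pos hq0 2).ne']
  have hFq : ∀ x : K, F (x ^ q) = F x := by
    intro x
    simp only [hF, hsq, hq3]
    ring
  have hFfix : ∀ x : K, (F x) ^ q = F x := by
    intro x
    simp only [hF, hpowq, hsq, hq3]
    ring
  -- kernel and range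
  set Ker : Finset K := Finset.univ.filter (fun x => F x = 0) with hKerdef
  set R : Finset K := Finset.univ.image F with hRdef
  set Fix : Finset K := Finset.univ.filter (fun x => x ^ q = x) with hFixdef
  -- kernel card bound via polynomial roots
  have hcard_poly : ∀ (P : Polynomial K) (s : Finset K), P ≠ 0 →
      (∀ x ∈ s, P.IsRoot x) → s.card ≤ P.natDegree := by
    intro P s hP hroots
    calc s.card ≤ P.roots.toFinset.card := by
          apply Finset.card_le_card
          intro x hx
          simp only [Multiset.mem_toFinset, Polynomial.mem_roots']
          exact ⟨hP, hroots x hx⟩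
      _ ≤ Multiset.card P.roots := P.roots.toFinset_card_le
      _ ≤ P.natDegree := Polynomial.card_roots' P
  have hKer_le : Ker.card ≤ q ^ 2 := by
    set P : Polynomial K := Polynomial.X ^ q ^ 2 + (Polynomial.X ^ q + Polynomial.X) with hPdef
    have hdeg2 : (Polynomial.X ^ q + Polynomial.X : Polynomial K).natDegree = q := by
      rw [Polynomial.natDegree_add_eq_left_of_natDegree_lt] <;>
        simp [Polynomial.natDegree_X_pow, hq1]
    have hdeg : P.natDegree = q ^ 2 := by
      rw [hPdef, Polynomial.natDegree_add_eq_left_of_natDegree_lt] <;>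
        simp [Polynomial.natDegree_X_pow, hdeg2]
      nlinarith
    have hP0 : P ≠ 0 := by
      intro h
      rw [h, Polynomial.natDegree_zero] at hdeg
      nlinarith
    have hroots : ∀ x ∈ Ker, P.IsRoot x := by
      intro x hx
      simp only [hKerdef, Finset.mem_filter] at hx
      have hx2 := hx.2
      simp only [Polynomial.IsRoot, hPdef, Polynomial.eval_add, Polynomial.eval_pow,
        Polynomial.eval_X]
      simp only [hF] at hx2
      linear_combination hx2
    have hle := hcard_poly P Ker hP0 hroots
    omega
  have hFix_le : Fix.card ≤ q := by
    set P : Polynomial K := Polynomial.X ^ q + Polynomial.X with hPdef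
    have hdeg : P.natDegree = q := by
      rw [hPdef, Polynomial.natDegree_add_eq_left_of_natDegree_lt] <;>
        simp [Polynomial.natDegree_X_pow, hq1]
    have hP0 : P ≠ 0 := by
      intro h
      rw [h, Polynomial.natDegree_zero] at hdeg
      omega
    have hroots : ∀ x ∈ Fix, P.IsRoot x := by
      intro x hx
      simp only [hFixdef, Finset.mem_filter] at hx
      simp only [Polynomial.IsRoot, hPdef, Polynomial.eval_add, Polynomial.eval_pow,
        Polynomial.eval_X, hx.2]
      exact hchar2 x
    have hle := hcard_poly P Fix hP0 hroots
    omega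
  have hR_sub : R ⊆ Fix := by
    intro c hc
    simp only [hRdef, Finset.mem_image] at hc
    obtain ⟨a, -, rfl⟩ := hc
    simp only [hFixdef, Finset.mem_filter, Finset.mem_univ, true_and]
    exact hFfix a
  have hR_le : R.card ≤ q := le_trans (Finset.card_le_card hR_sub) hFix_le
  -- all fibers over the range have the kernel's cardinality
  have hfiber : ∀ a0 : K, (Finset.univ.filter (fun x => F x = F a0)).card = Ker.card := by
    intro a0
    apply Finset.card_nbij' (fun x => x + a0) (fun y => y + a0)
    · intro x hx
      simp only [Finset.mem_coe, Finset.mem_filter, Finset.mem_univ, true_and] at hx ⊢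
      rw [hKerdef]
      simp only [Finset.mem_filter, Finset.mem_univ, true_and]
      rw [hFadd, hx, hchar2]
    · intro y hy
      rw [hKerdef] at hy
      simp only [Finset.mem_coe, Finset.mem_filter, Finset.mem_univ, true_and] at hy ⊢
      rw [hFadd, hy, zero_add]
    · intro x _; dsimp only; rw [add_assoc, hchar2, add_zero]
    · intro y _; dsimp only; rw [add_assoc, hchar2, add_zero]
  -- fiberwise counting: |Ker| * |R| = q^3
  have hsum : Ker.card * R.card = q ^ 3 := by
    have h1 : (Finset.univ : Finset K).card =
        ∑ c ∈ R, (Finset.univ.filter (fun x => F x = c)).card := by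
      apply Finset.card_eq_sum_card_fiberwise
      intro x _
      exact Finset.mem_image_of_mem F (Finset.mem_univ x)
    rw [Finset.card_univ, hK] at h1
    have h2 : ∑ c ∈ R, (Finset.univ.filter (fun x => F x = c)).card
        = ∑ c ∈ R, Ker.card := by
      apply Finset.sum_congr rfl
      intro c hc
      simp only [hRdef, Finset.mem_image] at hc
      obtain ⟨a0, -, rfl⟩ := hc
      exact hfiber a0
    rw [h2, Finset.sum_const, smul_eq_mul] at h1
    rw [mul_comm]
    exact h1.symm
  have hKer_card : Ker.card = q ^ 2 := by
    have h1 : q ^ 2 * q ≤ Ker.card * q := by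
      calc q ^ 2 * q = q ^ 3 := by ring
        _ = Ker.card * R.card := hsum.symm
        _ ≤ Ker.card * q := Nat.mul_le_mul_left _ hR_le
    have := Nat.le_of_mul_le_mul_right h1 hq0
    omega
  have hR_card : R.card = q := by
    rw [hKer_card] at hsum
    have : q ^ 2 * q = q ^ 3 := by ring
    have hq2 : 0 < q ^ 2 := pow_pos hq0 2
    exact Nat.eq_of_mul_eq_mul_left hq2 (by omega)
  have hR_eq_Fix : R = Fix := by
    apply Finset.eq_of_subset_of_card_le hR_sub
    rw [hR_card]; exact hFix_le
  -- every fixed point gives a fiber of size q^2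
  have hfiber1 : ∀ c : K, c ^ q = c →
      (Finset.univ.filter (fun x => F x = c)).card = q ^ 2 := by
    intro c hc
    have hcR : c ∈ R := by
      rw [hR_eq_Fix, hFixdef]
      simp [hc]
    simp only [hRdef, Finset.mem_image] at hcR
    obtain ⟨a0, -, rfl⟩ := hcR
    rw [hfiber a0, hKer_card]
  -- helper identities
  have hinv : ∀ x y : K, x + x ^ q + (x + x ^ q + y) = y := by
    intro x y
    rw [show x + x ^ q + (x + x ^ q + y) = (x + x) + (x ^ q + x ^ q) + y by ring,
      hchar2, hchar2, zero_add, zero_add]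
  have hFcomp : ∀ x y : K, F x + F (x + x ^ q + y) = F x + F y := by
    intro x y
    rw [hFadd, hFadd, hFq]
    rw [show F x + (F x + F x + F y) = (F x + F x) + (F x + F y) by ring, hchar2, zero_add]
  -- reduce Nat.card to a Finset count, with change of variables d ↦ a + a^q + d
  set P' : K × K → Prop := fun v => v.1 ≠ 0 ∧ v.2 ≠ 0 ∧ F v.1 + F v.2 ≠ 1 with hP'def
  have hmain : Nat.card {v : K × K //
      v.1 ≠ 0 ∧ v.1 + v.1 ^ q + v.2 ≠ 0 ∧
        (v.1 + v.1 ^ q + v.1 ^ q ^ 2) + (v.2 + v.2 ^ q + v.2 ^ q ^ 2) ≠ 1}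
      = (Finset.univ.filter P').card := by
    rw [Nat.card_eq_fintype_card, Fintype.card_subtype]
    apply Finset.card_nbij' (fun v : K × K => (v.1, v.1 + v.1 ^ q + v.2))
      (fun v : K × K => (v.1, v.1 + v.1 ^ q + v.2))
    · intro v hv
      simp only [Finset.mem_coe, Finset.mem_filter, Finset.mem_univ, true_and, hP'def, hF] at hv ⊢
      obtain ⟨h1, h2, h3⟩ := hv
      refine ⟨h1, h2, ?_⟩
      have := hFcomp v.1 v.2
      simp only [hF] at this
      rw [this]
      exact h3
    · intro v hv
      simp only [Finset.mem_coe, Finset.mem_filter, Finset.mem_univ, true_and, hP'def] at hv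
      obtain ⟨h1, h2, h3⟩ := hv
      simp only [Finset.mem_coe, Finset.mem_filter, Finset.mem_univ, true_and]
      refine ⟨h1, by rw [hinv]; exact h2, ?_⟩
      have hc := hFcomp v.1 v.2
      simp only [hF] at hc h3 ⊢
      rw [hc]
      exact h3
    · intro v _
      ext
      · rfl
      · exact hinv v.1 v.2
    · intro v _
      ext
      · rfl
      · exact hinv v.1 v.2
  -- counting the reduced set
  set N0 : Finset K := Finset.univ.filter (fun x => x ≠ 0) with hN0def
  have hN0 : N0.card + 1 = q ^ 3 := by
    rw [hN0def, Finset.filter_ne' Finset.univ 0, Finset.card_erase_add_one (Finset.mem_univ 0),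
      Finset.card_univ, hK]
  set A : Finset (K × K) := Finset.univ.filter (fun v : K × K => v.1 ≠ 0 ∧ v.2 ≠ 0) with hAdef
  have hA : A.card = N0.card * N0.card := by
    have h : A = N0 ×ˢ N0 := by
      ext v
      simp [hAdef, hN0def, Finset.mem_product]
    rw [h, Finset.card_product]
  set B : Finset (K × K) :=
    Finset.univ.filter (fun v : K × K => v.1 ≠ 0 ∧ v.2 ≠ 0 ∧ F v.1 + F v.2 = 1) with hBdef
  -- split A by the trace condition
  have hsplit : (Finset.univ.filter P').card + B.card = A.card := by
    have h1 : Finset.univ.filter P' = A.filter (fun v => ¬ (F v.1 + F v.2 = 1)) := by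
      rw [hAdef, Finset.filter_filter]
      apply Finset.filter_congr
      intro v _
      simp [hP'def, and_assoc]
    have h2 : B = A.filter (fun v => F v.1 + F v.2 = 1) := by
      rw [hBdef, hAdef, Finset.filter_filter]
      apply Finset.filter_congr
      intro v _
      simp [and_assoc]
    rw [h1, h2, add_comm]
    exact Finset.card_filter_add_card_filter_not _
  -- count B fiberwise over the first coordinate
  have hC1 : (N0.filter (fun a => F a = 1)).card = q ^ 2 := by
    have h1 : N0.filter (fun a => F a = 1) = Finset.univ.filter (fun a => F a = 1) := by
      rw [hN0def, Finset.filter_filter]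
      apply Finset.filter_congr
      intro a _
      simp only [and_iff_right_iff_imp]
      intro ha h0
      rw [h0, hF0] at ha
      exact zero_ne_one ha
    rw [h1]
    exact hfiber1 1 (one_pow q)
  have hinner : ∀ a : K, (Finset.univ.filter (fun e => e ≠ 0 ∧ F a + F e = 1)).card
      + (if F a = 1 then 1 else 0) = q ^ 2 := by
    intro a
    have hc : (1 + F a) ^ q = 1 + F a := by rw [hpowq, one_pow, hFfix]
    have heq : Finset.univ.filter (fun e : K => e ≠ 0 ∧ F a + F e = 1)
        = (Finset.univ.filter (fun e : K => F e = 1 + F a)).erase 0 := by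
      ext e
      simp only [Finset.mem_filter, Finset.mem_erase, Finset.mem_univ, true_and]
      constructor
      · rintro ⟨h1, h2⟩
        refine ⟨h1, ?_⟩
        rw [show (1 : K) + F a = F a + F e + F a by rw [h2],
          show F a + F e + F a = (F a + F a) + F e by ring, hchar2, zero_add]
      · rintro ⟨h1, h2⟩
        refine ⟨h1, ?_⟩
        rw [h2, show F a + (1 + F a) = (F a + F a) + 1 by ring, hchar2, zero_add]
    rw [heq]
    by_cases hFa : F a = 1
    · have h0mem : (0 : K) ∈ Finset.univ.filter (fun e : K => F e = 1 + F a) := by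
        simp only [Finset.mem_filter, Finset.mem_univ, true_and, hF0, hFa, hchar2]
      rw [if_pos hFa, Finset.card_erase_add_one h0mem]
      apply hfiber1
      exact hc
    · have h0mem : (0 : K) ∉ Finset.univ.filter (fun e : K => F e = 1 + F a) := by
        simp only [Finset.mem_filter, Finset.mem_univ, true_and, hF0]
        intro h
        apply hFa
        rw [show F a = (1 + F a) + 1 by
          rw [show (1:K) + F a + 1 = (1+1) + F a by ring, hchar2, zero_add], ← h, zero_add]
      rw [if_neg hFa, Finset.erase_eq_of_notMem h0mem, add_zero]
      exact hfiber1 _ hc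
  have hBcount : B.card + q ^ 2 = N0.card * q ^ 2 := by
    have h1 : B.card = ∑ a ∈ N0, (B.filter (fun v => v.1 = a)).card := by
      apply Finset.card_eq_sum_card_fiberwise
      intro v hv
      rw [hBdef] at hv
      simp only [Finset.mem_coe, Finset.mem_filter, Finset.mem_univ, true_and] at hv
      rw [hN0def]
      simp [hv.1]
    have h2 : ∀ a ∈ N0, (B.filter (fun v => v.1 = a)).card
        = (Finset.univ.filter (fun e : K => e ≠ 0 ∧ F a + F e = 1)).card := by
      intro a ha
      rw [hN0def] at ha
      simp only [Finset.mem_filter, Finset.mem_univ, true_and] at ha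
      apply Finset.card_nbij' (fun v : K × K => v.2) (fun e : K => (a, e))
      · intro v hv
        rw [hBdef] at hv
        simp only [Finset.mem_coe, Finset.mem_filter, Finset.mem_univ, true_and] at hv ⊢
        obtain ⟨⟨-, h2, h3⟩, h4⟩ := hv
        rw [← h4]
        exact ⟨h2, h3⟩
      · intro e he
        simp only [Finset.mem_coe, Finset.mem_filter, Finset.mem_univ, true_and] at he
        rw [hBdef]
        simp only [Finset.mem_coe, Finset.mem_filter, Finset.mem_univ, true_and]
        exact ⟨⟨ha, he.1, he.2⟩, by trivial⟩
      · intro v hv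
        simp only [Finset.mem_coe, Finset.mem_filter] at hv
        ext
        · exact hv.2.symm
        · rfl
      · intro e _
        rfl
    rw [h1, Finset.sum_congr rfl h2]
    have h3 : ∑ a ∈ N0, ((Finset.univ.filter (fun e : K => e ≠ 0 ∧ F a + F e = 1)).card
        + (if F a = 1 then 1 else 0)) = N0.card * q ^ 2 := by
      rw [Finset.sum_congr rfl (fun a _ => hinner a), Finset.sum_const, smul_eq_mul]
    rw [Finset.sum_add_distrib, ← Finset.card_filter] at h3
    rw [← h3, hC1]
  -- final arithmetic
  rw [hmain]
  have e1 : ((Finset.univ.filter P').card : ℤ) + B.card = (N0.card : ℤ) * N0.card := by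
    have h := hsplit
    rw [hA] at h
    exact_mod_cast h
  have e2 : (B.card : ℤ) + (q : ℤ) ^ 2 = (N0.card : ℤ) * (q : ℤ) ^ 2 := by
    exact_mod_cast hBcount
  have e3 : (N0.card : ℤ) = (q : ℤ) ^ 3 - 1 := by
    have : ((N0.card : ℤ)) + 1 = (q : ℤ) ^ 3 := by exact_mod_cast hN0
    linarith
  rw [e3] at e1 e2
  linear_combination e1 - e2
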